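/- Let ε > 0, let ν be a nonnegative Borel measure on ℝ with ν({0}) = 0, ν(ℝ \ [−ε, ε]) = 0 and ∫ x² dν(x) < ∞, and suppose ∫_{(0,∞)} x dν(x) = ∞. Let b ∈ ℝ and define g(u) := b + ∫ (e^{ux} − 1) x dν(x). Then g has exactly one root: there is a unique u* ∈ ℝ with g(u*) = 0. -/
import Mathlib


open MeasureTheory Real Set Filter

private lemma exp_sub_one_abs_le (t : ℝ) : |Real.exp t - 1| ≤ |t| * Real.exp |t| := by
  rcases le_or_gt 0 t with ht | ht
  · rw [abs_of_nonneg ht,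
      abs_of_nonneg (by linarith [Real.add_one_le_exp t] : (0:ℝ) ≤ Real.exp t - 1)]
    have h1 : (-t) + 1 ≤ Real.exp (-t) := Real.add_one_le_exp (-t)
    rw [Real.exp_neg] at h1
    have hp : 0 < Real.exp t := Real.exp_pos t
    have h2 : ((-t) + 1) * Real.exp t ≤ 1 := by
      have := mul_le_mul_of_nonneg_right h1 hp.le
      rwa [inv_mul_cancel₀ hp.ne'] at this
    nlinarith
  · rw [abs_of_neg ht,
      abs_of_nonpos (by linarith [Real.exp_lt_one_iff.mpr ht] : Real.exp t - 1 ≤ 0)]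
    have h1 : t + 1 ≤ Real.exp t := Real.add_one_le_exp t
    have h2 : 1 ≤ Real.exp (-t) := Real.one_le_exp (by linarith)
    nlinarith

private lemma f_mono {u v : ℝ} (x : ℝ) (huv : u ≤ v) :
    (Real.exp (u * x) - 1) * x ≤ (Real.exp (v * x) - 1) * x := by
  rcases lt_trichotomy x 0 with hx | hx | hx
  · have h : Real.exp (v * x) ≤ Real.exp (u * x) :=
      Real.exp_le_exp.mpr (by nlinarith)
    nlinarith
  · simp [hx]
  · have h : Real.exp (u * x) ≤ Real.exp (v * x) :=
      Real.exp_le_exp.mpr (by nlinarith)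
    nlinarith

private lemma f_strict_mono {u v : ℝ} (x : ℝ) (hx : x ≠ 0) (huv : u < v) :
    (Real.exp (u * x) - 1) * x < (Real.exp (v * x) - 1) * x := by
  rcases lt_or_gt_of_ne hx with hx | hx
  · have h : Real.exp (v * x) < Real.exp (u * x) :=
      Real.exp_lt_exp.mpr (by nlinarith)
    nlinarith
  · have h : Real.exp (u * x) < Real.exp (v * x) :=
      Real.exp_lt_exp.mpr (by nlinarith)
    nlinarith

/-- Case 2 in the proof of Lemma 3.2 (`σ = 0`, infinite variation on the positive side):
for a Lévy measure `ν` supported in `[−ε, ε]` with finite second moment but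
`∫_{(0,∞)} x dν = ∞`, the function `g(u) = b + ∫ (e^{ux} − 1)x dν` has exactly one root. -/
theorem stmt_17 (ε : ℝ) (hε : 0 < ε) (ν : Measure ℝ) (hν0 : ν {0} = 0)
    (hsupp : ν (Icc (-ε) ε)ᶜ = 0)
    (hmom : ∫⁻ x, ENNReal.ofReal (x ^ 2) ∂ν < ⊤)
    (hinf : ∫⁻ x in Ioi (0 : ℝ), ENNReal.ofReal x ∂ν = ⊤)
    (b : ℝ) (g : ℝ → ℝ)
    (hg : ∀ u : ℝ, g u = b + ∫ x, (Real.exp (u * x) - 1) * x ∂ν) :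
    ∃! u : ℝ, g u = 0 := by
  set f : ℝ → ℝ → ℝ := fun u x => (Real.exp (u * x) - 1) * x with hfdef
  -- a.e. the support is inside `[-ε, ε]`
  have hae : ∀ᵐ x ∂ν, |x| ≤ ε := by
    have : ∀ᵐ x ∂ν, x ∈ Icc (-ε) ε := MeasureTheory.mem_ae_iff.mpr hsupp
    exact this.mono fun x hx => abs_le.mpr ⟨hx.1, hx.2⟩
  -- x ↦ x² is integrable
  have hx2 : Integrable (fun x : ℝ => x ^ 2) ν := by
    refine ⟨(continuous_pow 2).aestronglyMeasurable, ?_⟩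
    rw [hasFiniteIntegral_iff_ofReal (Eventually.of_forall fun x => sq_nonneg x)]
    exact hmom
  -- integrability of the integrand for every `u`
  have hcontf : ∀ u : ℝ, Continuous (f u) := by
    intro u
    exact ((Real.continuous_exp.comp (continuous_const.mul continuous_id)).sub
      continuous_const).mul continuous_id
  have hbound : ∀ (R : ℝ) (u x : ℝ), |u| ≤ R → |x| ≤ ε →
      ‖f u x‖ ≤ R * Real.exp (R * ε) * x ^ 2 := by
    intro R u x huR hx
    have hR : 0 ≤ R := le_trans (abs_nonneg u) huR
    have h1 : |Real.exp (u * x) - 1| ≤ |u * x| * Real.exp |u * x| := exp_sub_one_abs_le _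
    have h2 : |u * x| ≤ R * ε := by
      rw [abs_mul]
      exact mul_le_mul huR hx (abs_nonneg x) hR
    have h3 : Real.exp |u * x| ≤ Real.exp (R * ε) := Real.exp_le_exp.mpr h2
    have h4 : |u * x| ≤ R * |x| := by
      rw [abs_mul]
      exact mul_le_mul_of_nonneg_right huR (abs_nonneg x)
    have h5 : ‖f u x‖ = |Real.exp (u * x) - 1| * |x| := by
      rw [hfdef]; simp [Real.norm_eq_abs, abs_mul]
    rw [h5]
    calc |Real.exp (u * x) - 1| * |x|
        ≤ (|u * x| * Real.exp |u * x|) * |x| :=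
          mul_le_mul_of_nonneg_right h1 (abs_nonneg x)
      _ ≤ (R * |x| * Real.exp (R * ε)) * |x| := by
          have h6 : |u * x| * Real.exp |u * x| ≤ R * |x| * Real.exp (R * ε) :=
            mul_le_mul h4 h3 (Real.exp_pos _).le (by positivity)
          exact mul_le_mul_of_nonneg_right h6 (abs_nonneg x)
      _ = R * Real.exp (R * ε) * (|x| * |x|) := by ring
      _ = R * Real.exp (R * ε) * x ^ 2 := by rw [← sq_abs]; ring
  have hint : ∀ u : ℝ, Integrable (f u) ν := by
    intro u
    refine Integrable.mono' (hx2.const_mul (|u| * Real.exp (|u| * ε)))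
      ((hcontf u).aestronglyMeasurable) ?_
    filter_upwards [hae] with x hx
    exact hbound |u| u x le_rfl hx
  -- continuity of `u ↦ ∫ f u`
  have hcontI : Continuous fun u => ∫ x, f u x ∂ν := by
    rw [continuous_iff_continuousAt]
    intro u₀
    apply continuousAt_of_dominated (bound := fun x => (|u₀| + 1) * Real.exp ((|u₀| + 1) * ε) * x ^ 2)
    · exact Eventually.of_forall fun u => (hcontf u).aestronglyMeasurable
    · filter_upwards [Metric.ball_mem_nhds u₀ one_pos] with u hu
      filter_upwards [hae] with x hx
      have huR : |u| ≤ |u₀| + 1 := by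
        have h := abs_sub_abs_le_abs_sub u u₀
        have : |u - u₀| < 1 := by
          rwa [Metric.mem_ball, Real.dist_eq] at hu
        linarith
      exact hbound (|u₀| + 1) u x huR hx
    · exact hx2.const_mul _
    · refine Eventually.of_forall fun x => ?_
      exact (((Real.continuous_exp.comp (continuous_id.mul continuous_const)).sub
        continuous_const).mul continuous_const).continuousAt
  have hcontg : Continuous g := by
    have : g = fun u => b + ∫ x, f u x ∂ν := funext hg
    rw [this]
    exact continuous_const.add hcontI
  -- positivity of `ν (Ioi 0)`
  have hp0 : 0 < ν (Ioi (0 : ℝ)) := by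
    rcases eq_or_ne (ν (Ioi (0 : ℝ))) 0 with h | h
    · exfalso
      rw [setLIntegral_measure_zero _ _ h] at hinf
      simp at hinf
    · exact pos_iff_ne_zero.mpr h
  -- strict monotonicity of g
  have hmono : StrictMono g := by
    intro u v huv
    rw [hg u, hg v]
    show b + ∫ x, f u x ∂ν < b + ∫ x, f v x ∂ν
    have hsub : Integrable (fun x => f v x - f u x) ν := (hint v).sub (hint u)
    have hpos : 0 < ∫ x, (f v x - f u x) ∂ν := by
      rw [integral_pos_iff_support_of_nonneg
        (fun x => sub_nonneg.mpr (f_mono x huv.le)) hsub]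
      refine lt_of_lt_of_le hp0 (measure_mono ?_)
      intro x hx
      exact sub_ne_zero.mpr (f_strict_mono x (ne_of_gt hx) huv).ne'
    rw [integral_sub (hint v) (hint u)] at hpos
    linarith
  -- positive side : g u ≥ b + u * c for u ≥ 0
  set c := ∫ x in Ioi (0:ℝ), x ^ 2 ∂ν with hcdef
  have hc : 0 < c := by
    rw [hcdef, setIntegral_pos_iff_support_of_nonneg_ae
      (Eventually.of_forall fun x => sq_nonneg x) hx2.integrableOn]
    refine lt_of_lt_of_le hp0 (measure_mono ?_)
    intro x hx
    have hx0 : (0:ℝ) < x := hx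
    exact ⟨by simp only [Function.mem_support]; positivity, hx⟩
  have hgrow : ∀ u : ℝ, 0 ≤ u → b + u * c ≤ g u := by
    intro u hu
    rw [hg u]
    show b + u * c ≤ b + ∫ x, f u x ∂ν
    have hfn : 0 ≤ᵐ[ν] f u := Eventually.of_forall fun x => by
      have := f_mono (u := 0) (v := u) x hu
      simpa using this
    have h1 : ∫ x in Ioi (0:ℝ), f u x ∂ν ≤ ∫ x, f u x ∂ν :=
      setIntegral_le_integral (hint u) hfn
    have h2 : u * c ≤ ∫ x in Ioi (0:ℝ), f u x ∂ν := by
      have heq : u * c = ∫ x in Ioi (0:ℝ), u * x ^ 2 ∂ν := by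
        rw [hcdef, integral_const_mul]
      rw [heq]
      refine setIntegral_mono_on ((hx2.const_mul u).integrableOn)
        ((hint u).integrableOn) measurableSet_Ioi ?_
      intro x hx
      have hx0 : (0:ℝ) < x := hx
      have hexp : u * x + 1 ≤ Real.exp (u * x) := Real.add_one_le_exp _
      have : u * x ≤ Real.exp (u * x) - 1 := by linarith
      calc u * x ^ 2 = (u * x) * x := by ring
        _ ≤ (Real.exp (u * x) - 1) * x := mul_le_mul_of_nonneg_right this hx0.le
    linarith
  obtain ⟨u₂, hu₂0, hgu₂⟩ : ∃ u₂ : ℝ, 0 ≤ u₂ ∧ 0 < g u₂ := by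
    refine ⟨(|b| + 1) / c, by positivity, ?_⟩
    have := hgrow ((|b| + 1) / c) (by positivity)
    have hmul : (|b| + 1) / c * c = |b| + 1 := div_mul_cancel₀ _ hc.ne'
    rw [hmul] at this
    have := abs_nonneg b
    have := neg_abs_le b
    linarith
  -- negative side
  set μ' := ν.withDensity fun x => ENNReal.ofReal x with hμ'def
  obtain ⟨δ, hδ, hδM⟩ : ∃ δ : ℝ, 0 < δ ∧ ENNReal.ofReal (2 * (|b| + 1)) < μ' (Ioi δ) := by
    have hmon : Monotone fun n : ℕ => Ioi (((n:ℝ) + 1)⁻¹) := by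
      intro n m hnm
      apply Ioi_subset_Ioi
      have h1 : (0:ℝ) < (n:ℝ) + 1 := by positivity
      exact inv_anti₀ h1 (by exact_mod_cast by linarith)
    have hun : ⋃ n : ℕ, Ioi (((n:ℝ) + 1)⁻¹) = Ioi (0:ℝ) := by
      ext x
      simp only [mem_iUnion, mem_Ioi]
      constructor
      · rintro ⟨n, hn⟩
        exact lt_trans (by positivity) hn
      · intro hx
        obtain ⟨n, hn⟩ := exists_nat_gt x⁻¹
        refine ⟨n, ?_⟩
        have hx' : 0 < x⁻¹ := inv_pos.mpr hx
        have h1 : x⁻¹ < (n:ℝ) + 1 := by linarith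
        have := inv_strictAnti₀ hx' h1
        rwa [inv_inv] at this
    have htend := tendsto_measure_iUnion_atTop (μ := μ') hmon
    rw [hun] at htend
    have hμtop : μ' (Ioi (0:ℝ)) = ⊤ := by
      rw [hμ'def, withDensity_apply _ measurableSet_Ioi]
      exact hinf
    rw [hμtop] at htend
    have hev := htend.eventually
      (lt_mem_nhds (show ENNReal.ofReal (2 * (|b| + 1)) < ⊤ from ENNReal.ofReal_lt_top))
    obtain ⟨n, hn⟩ := hev.exists
    exact ⟨((n:ℝ) + 1)⁻¹, by positivity, hn⟩
  -- integrability of x on Ioi δ and the value bound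
  have hIx : IntegrableOn (fun x : ℝ => x) (Ioi δ) ν := by
    refine Integrable.mono' (hx2.integrableOn.const_mul δ⁻¹)
      (aestronglyMeasurable_id) ?_
    filter_upwards [ae_restrict_mem measurableSet_Ioi] with x hx
    have hx0 : δ < x := hx
    rw [Real.norm_eq_abs, abs_of_pos (lt_trans hδ hx0)]
    have h : δ * x ≤ x * x := by nlinarith
    calc x = δ⁻¹ * (δ * x) := by field_simp
      _ ≤ δ⁻¹ * (x * x) := by
          exact mul_le_mul_of_nonneg_left h (by positivity)
      _ = δ⁻¹ * x ^ 2 := by ring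
  set I := ∫ x in Ioi δ, x ∂ν with hIdef
  have hIval : 2 * (|b| + 1) ≤ I := by
    have hnn : 0 ≤ᵐ[ν.restrict (Ioi δ)] fun x : ℝ => x := by
      filter_upwards [ae_restrict_mem measurableSet_Ioi] with x hx
      exact le_of_lt (lt_trans hδ hx)
    have heq : ENNReal.ofReal I = μ' (Ioi δ) := by
      rw [hIdef, ofReal_integral_eq_lintegral_ofReal hIx hnn, hμ'def,
        withDensity_apply _ measurableSet_Ioi]
    have h1 : ENNReal.ofReal (2 * (|b| + 1)) ≤ ENNReal.ofReal I := by
      rw [heq]; exact hδM.le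
    have hI0 : 0 ≤ I := setIntegral_nonneg measurableSet_Ioi
      (fun x hx => le_of_lt (lt_trans hδ hx))
    exact (ENNReal.ofReal_le_ofReal_iff hI0).mp h1
  -- the negative-side point
  set u₁ := -(Real.log 2) / δ with hu₁def
  have hlog2 : 0 < Real.log 2 := Real.log_pos (by norm_num)
  have hu₁neg : u₁ < 0 := by
    rw [hu₁def]
    exact div_neg_of_neg_of_pos (by linarith) hδ
  have hexpu₁ : Real.exp (u₁ * δ) = 1 / 2 := by
    have : u₁ * δ = -(Real.log 2) := by
      rw [hu₁def]; field_simp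
    rw [this, Real.exp_neg, Real.exp_log (by norm_num : (0:ℝ) < 2)]
    norm_num
  have hgu₁ : g u₁ < 0 := by
    rw [hg u₁]
    show b + ∫ x, f u₁ x ∂ν < 0
    have hfnp : ∀ x, f u₁ x ≤ 0 := fun x => by
      have := f_mono (u := u₁) (v := 0) x hu₁neg.le
      simpa using this
    -- split the integral
    have hsplit : (∫ x in Ioi δ, f u₁ x ∂ν) + (∫ x in (Ioi δ)ᶜ, f u₁ x ∂ν)
        = ∫ x, f u₁ x ∂ν := integral_add_compl measurableSet_Ioi (hint u₁)
    have hcompl : (∫ x in (Ioi δ)ᶜ, f u₁ x ∂ν) ≤ 0 :=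
      integral_nonpos fun x => hfnp x
    have hmain : (∫ x in Ioi δ, f u₁ x ∂ν) ≤ (Real.exp (u₁ * δ) - 1) * I := by
      have heq : (Real.exp (u₁ * δ) - 1) * I
          = ∫ x in Ioi δ, (Real.exp (u₁ * δ) - 1) * x ∂ν := by
        rw [hIdef, integral_const_mul]
      rw [heq]
      refine setIntegral_mono_on ((hint u₁).integrableOn)
        (hIx.const_mul _) measurableSet_Ioi ?_
      intro x hx
      have hx0 : δ < x := hx
      have h1 : u₁ * x ≤ u₁ * δ := by nlinarith
      have h2 : Real.exp (u₁ * x) ≤ Real.exp (u₁ * δ) := Real.exp_le_exp.mpr h1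
      have hxpos : 0 < x := lt_trans hδ hx0
      exact mul_le_mul_of_nonneg_right (by linarith) hxpos.le
    rw [hexpu₁] at hmain
    have := abs_nonneg b
    have := neg_abs_le b
    linarith [hsplit, hcompl, hmain, hIval, le_abs_self b]
  -- intermediate value theorem + strict monotonicity
  have h12 : u₁ < u₂ := by
    have : g u₁ < g u₂ := lt_trans hgu₁ hgu₂
    exact hmono.lt_iff_lt.mp this
  have hIVT := intermediate_value_Icc h12.le hcontg.continuousOn
  have h0mem : (0:ℝ) ∈ Icc (g u₁) (g u₂) := ⟨hgu₁.le, hgu₂.le⟩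
  obtain ⟨u, _, hu⟩ := hIVT h0mem
  exact ⟨u, hu, fun y hy => hmono.injective (hy.trans hu.symm)⟩
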